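/- The functions f(t) = (t⁴ - b⁴)^{1/4}(t⁴ - c⁴)^{1/4}(t⁴ - a⁴)^{-1/4} (with cyclic relabelings for f₂, f₃) and f(t) = 2t³/((t⁴-a⁴)(t⁴-b⁴)(t⁴-c⁴))^{1/4} satisfy the system (f₁f₂)' = f f₃, (f₁f₃)' = f f₂, (f₂f₃)' = f f₁ on any interval where t⁴ > max(a⁴,b⁴,c⁴). -/

import Mathlib

/-- `F a b c` is the BGPP function `((t⁴-b⁴)(t⁴-c⁴))^{1/4} / (t⁴-a⁴)^{1/4}`. -/
noncomputable def F (a b c : ℝ) : ℝ → ℝ :=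
  fun t => ((t ^ 4 - b ^ 4) * (t ^ 4 - c ^ 4)) ^ ((1 : ℝ) / 4) /
    (t ^ 4 - a ^ 4) ^ ((1 : ℝ) / 4)

/-- `Ff a b c` is the function `2t³ / ((t⁴-a⁴)(t⁴-b⁴)(t⁴-c⁴))^{1/4}`. -/
noncomputable def Ff (a b c : ℝ) : ℝ → ℝ :=
  fun t => 2 * t ^ 3 /
    ((t ^ 4 - a ^ 4) * ((t ^ 4 - b ^ 4) * (t ^ 4 - c ^ 4))) ^ ((1 : ℝ) / 4)

lemma F_swap (a b c : ℝ) : F a b c = F a c b := by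
  funext t; simp only [F]; ring_nf

lemma Ff_perm (a b c a' b' c' : ℝ)
    (h : (a ^ 4 - 0) * ((b ^ 4 - 0) * (c ^ 4 - 0)) = (a' ^ 4) * ((b' ^ 4) * (c' ^ 4)))
    (h2 : ∀ t : ℝ, (t ^ 4 - a ^ 4) * ((t ^ 4 - b ^ 4) * (t ^ 4 - c ^ 4)) =
      (t ^ 4 - a' ^ 4) * ((t ^ 4 - b' ^ 4) * (t ^ 4 - c' ^ 4))) :
    Ff a b c = Ff a' b' c' := by
  funext t; simp only [Ff, h2 t]

lemma key (a b c t : ℝ)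
    (ha : a ^ 4 < t ^ 4) (hb : b ^ 4 < t ^ 4) (hc : c ^ 4 < t ^ 4) :
    HasDerivAt (fun s => F a b c s * F b a c s) (Ff a b c t * F c a b t) t := by
  have hA : (0:ℝ) < t ^ 4 - a ^ 4 := sub_pos.2 ha
  have hB : (0:ℝ) < t ^ 4 - b ^ 4 := sub_pos.2 hb
  have hC : (0:ℝ) < t ^ 4 - c ^ 4 := sub_pos.2 hc
  have hinner : HasDerivAt (fun s : ℝ => s ^ 4 - c ^ 4) (4 * t ^ 3) t := by
    simpa using (hasDerivAt_pow 4 t).sub_const (c ^ 4)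
  have hd : HasDerivAt (fun s : ℝ => (s ^ 4 - c ^ 4) ^ ((1:ℝ)/2))
      (4 * t ^ 3 * ((1:ℝ)/2) * (t ^ 4 - c ^ 4) ^ ((1:ℝ)/2 - 1)) t :=
    hinner.rpow_const (Or.inl hC.ne')
  -- local equality of functions
  have hEq : (fun s => F a b c s * F b a c s)
      =ᶠ[nhds t] fun s : ℝ => (s ^ 4 - c ^ 4) ^ ((1:ℝ)/2) := by
    have contp : Continuous fun s : ℝ => s ^ 4 := continuous_pow 4
    have evA : ∀ᶠ s in nhds t, a ^ 4 < s ^ 4 :=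
      continuousAt_const.eventually_lt (contp.continuousAt (x := t)) ha
    have evB : ∀ᶠ s in nhds t, b ^ 4 < s ^ 4 :=
      continuousAt_const.eventually_lt (contp.continuousAt (x := t)) hb
    have evC : ∀ᶠ s in nhds t, c ^ 4 < s ^ 4 :=
      continuousAt_const.eventually_lt (contp.continuousAt (x := t)) hc
    filter_upwards [evA, evB, evC] with s hA' hB' hC'
    have hA' : (0:ℝ) < s ^ 4 - a ^ 4 := sub_pos.2 hA'
    have hB' : (0:ℝ) < s ^ 4 - b ^ 4 := sub_pos.2 hB'
    have hC' : (0:ℝ) < s ^ 4 - c ^ 4 := sub_pos.2 hC'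
    have hAne : (s ^ 4 - a ^ 4) ^ ((1:ℝ)/4) ≠ 0 :=
      (Real.rpow_pos_of_pos hA' _).ne'
    have hBne : (s ^ 4 - b ^ 4) ^ ((1:ℝ)/4) ≠ 0 :=
      (Real.rpow_pos_of_pos hB' _).ne'
    simp only [F]
    rw [Real.mul_rpow hB'.le hC'.le, Real.mul_rpow hA'.le hC'.le,
      show ((1:ℝ)/2) = (1:ℝ)/4 + (1:ℝ)/4 by norm_num,
      Real.rpow_add hC']
    field_simp
  have hval : Ff a b c t * F c a b t
      = 4 * t ^ 3 * ((1:ℝ)/2) * (t ^ 4 - c ^ 4) ^ ((1:ℝ)/2 - 1) := by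
    have hCne : (t ^ 4 - c ^ 4) ^ ((1:ℝ)/4) ≠ 0 := (Real.rpow_pos_of_pos hC _).ne'
    have hABne : ((t ^ 4 - a ^ 4) * (t ^ 4 - b ^ 4)) ^ ((1:ℝ)/4) ≠ 0 :=
      (Real.rpow_pos_of_pos (mul_pos hA hB) _).ne'
    simp only [Ff, F]
    rw [show (t ^ 4 - a ^ 4) * ((t ^ 4 - b ^ 4) * (t ^ 4 - c ^ 4))
        = ((t ^ 4 - a ^ 4) * (t ^ 4 - b ^ 4)) * (t ^ 4 - c ^ 4) by ring,
      Real.mul_rpow (mul_pos hA hB).le hC.le,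
      show ((1:ℝ)/2 - 1) = -((1:ℝ)/4 + (1:ℝ)/4) by norm_num,
      Real.rpow_neg hC.le, Real.rpow_add hC]
    field_simp
    ring
  rw [hval]
  exact hd.congr_of_eventuallyEq hEq

/-- The triaxial Bianchi IX BGPP functions satisfy the evolution system
`(f₁f₂)' = f f₃`, `(f₁f₃)' = f f₂`, `(f₂f₃)' = f f₁` where `t⁴ > max(a⁴,b⁴,c⁴)`. -/
theorem stmt_2 (a b c t : ℝ)
    (ha : a ^ 4 < t ^ 4) (hb : b ^ 4 < t ^ 4) (hc : c ^ 4 < t ^ 4) :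
    HasDerivAt (fun s => F a b c s * F b a c s) (Ff a b c t * F c a b t) t ∧
    HasDerivAt (fun s => F a b c s * F c a b s) (Ff a b c t * F b a c t) t ∧
    HasDerivAt (fun s => F b a c s * F c a b s) (Ff a b c t * F a b c t) t := by
  refine ⟨key a b c t ha hb hc, ?_, ?_⟩
  · have h := key a c b t ha hc hb
    have e1 : F a c b = F a b c := (F_swap a b c).symm
    have e2 : Ff a c b = Ff a b c := Ff_perm a c b a b c (by ring) (fun t => by ring)
    rw [e1, e2] at h
    exact h
  · have h := key b c a t hb hc ha
    have e1 : Ff b c a = Ff a b c := Ff_perm b c a a b c (by ring) (fun t => by ring)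
    have e2 : F b c a = F b a c := (F_swap b a c).symm
    have e3 : F c b a = F c a b := F_swap c b a
    rw [e1, e2, e3] at h
    exact h
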